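/- Let n ≥ 0, let A_0 ≤ A_1 ≤ ⋯ ≤ A_n be an increasing chain of subgroups of a group A_n, and let B_0 ≤ B_1 ≤ ⋯ ≤ B_n be an increasing chain of subgroups of a group B_n. Let G be a group equipped with homomorphisms φ_k : A_{n−k} × B_k → G for k = 0, …, n such that φ_k(a,b) = φ_{k+1}(a,b) whenever a ∈ A_{n−k−1} and b ∈ B_k (0 ≤ k < n), and suppose (G, (φ_k)) is the colimit of this diagram: for every group H and homomorphisms ψ_k : A_{n−k} × B_k → H satisfying the same compatibility conditions, there is a unique homomorphism h : G → H with ψ_k = h ∘ φ_k for all k. Define j : A_n → G by j(a) = φ_0(a,1) and j' : B_n → G by j'(b) = φ_n(1,b). Then the homomorphism j ∗ j' : A_n ∗ B_n → G from the free product is surjective, and its kernel is the smallest normal subgroup N of A_n ∗ B_n containing all commutators [a,b] with a ∈ A_{n−k}, b ∈ B_k, for k = 0, 1, …, n (where A_{n−k} and B_k are viewed inside the free product via A_{n−k} ≤ A_n and B_k ≤ B_n). -/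

import Mathlib

open Monoid
open scoped commutatorElement

/-- Let `A_0 ≤ ⋯ ≤ A_n` and `B_0 ≤ ⋯ ≤ B_n` be increasing chains of
subgroups of groups `A = A_n` and `B = B_n`, and let `G`, with compatible homomorphisms
`φ_k : A_{n-k} × B_k → G` (`k = 0, …, n`), be the colimit of the zig-zag diagram formed
by the products `A_{n-k} × B_k` and the inclusions
`A_{n-k-1} × B_k → A_{n-k} × B_k`, `A_{n-k-1} × B_k → A_{n-k-1} × B_{k+1}`.
Let `j : A → G`, `j(a) = φ_0(a,1)` and `j' : B → G`, `j'(b) = φ_n(1,b)`.  Then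
`j ∗ j' : A ∗ B → G` is surjective with kernel the smallest normal subgroup containing
all commutators `[a,b]` with `a ∈ A_{n-k}`, `b ∈ B_k`, `k = 0, 1, …, n`. -/
theorem free_product_presentation_of_colimit
    {A B G : Type} [Group A] [Group B] [Group G] (n : ℕ)
    (𝒜 : ℕ → Subgroup A) (ℬ : ℕ → Subgroup B)
    (h𝒜 : ∀ j k, j ≤ k → k ≤ n → 𝒜 j ≤ 𝒜 k)
    (hℬ : ∀ j k, j ≤ k → k ≤ n → ℬ j ≤ ℬ k)
    (h𝒜top : 𝒜 n = ⊤) (hℬtop : ℬ n = ⊤)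
    (φ : ∀ k, k ≤ n → (↥(𝒜 (n - k)) × ↥(ℬ k)) →* G)
    (hφ : ∀ (k : ℕ) (hk : k < n) (a : A) (b : B)
        (ha : a ∈ 𝒜 (n - (k + 1))) (hb : b ∈ ℬ k),
        φ k hk.le (⟨a, h𝒜 (n - (k+1)) (n - k) (by omega) (by omega) ha⟩, ⟨b, hb⟩)
          = φ (k + 1) hk (⟨a, ha⟩, ⟨b, hℬ k (k+1) (by omega) hk hb⟩))
    (hcolim : ∀ (H : Type) [Group H],
        ∀ ψ : ∀ k, k ≤ n → (↥(𝒜 (n - k)) × ↥(ℬ k)) →* H,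
        (∀ (k : ℕ) (hk : k < n) (a : A) (b : B)
            (ha : a ∈ 𝒜 (n - (k + 1))) (hb : b ∈ ℬ k),
            ψ k hk.le (⟨a, h𝒜 (n - (k+1)) (n - k) (by omega) (by omega) ha⟩, ⟨b, hb⟩)
              = ψ (k + 1) hk (⟨a, ha⟩, ⟨b, hℬ k (k+1) (by omega) hk hb⟩)) →
        ∃! h : G →* H, ∀ (k : ℕ) (hk : k ≤ n), h.comp (φ k hk) = ψ k hk)
    (j : A →* G) (hj : ∀ a : A, j a = φ 0 (Nat.zero_le n) (⟨a, by simp [h𝒜top]⟩, 1))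
    (j' : B →* G) (hj' : ∀ b : B, j' b = φ n le_rfl (1, ⟨b, by simp [hℬtop]⟩)) :
    Function.Surjective (Coprod.lift j j') ∧
    MonoidHom.ker (Coprod.lift j j') = Subgroup.normalClosure
      {w : Coprod A B | ∃ k ≤ n, ∃ a ∈ 𝒜 (n - k), ∃ b ∈ ℬ k,
        w = ⁅(Coprod.inl a : Coprod A B), (Coprod.inr b : Coprod A B)⁆} := by
  -- congruence along equal indices
  have φcongr : ∀ k k' (hkk : k = k') (hk : k ≤ n) (a : A) (b : B)
      (ha : a ∈ 𝒜 (n - k)) (hb : b ∈ ℬ k),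
      φ k hk (⟨a, ha⟩, ⟨b, hb⟩)
        = φ k' (hkk ▸ hk) (⟨a, by rw [← hkk]; exact ha⟩, ⟨b, by rw [← hkk]; exact hb⟩) := by
    intro k k' hkk
    subst hkk
    intros
    rfl
  -- `j a = φ k (a, 1)` for `a ∈ 𝒜 (n - k)`
  have key1 : ∀ k (hk : k ≤ n), ∀ a (ha : a ∈ 𝒜 (n - k)),
      j a = φ k hk (⟨a, ha⟩, 1) := by
    intro k
    induction k with
    | zero => intro hk a ha; exact hj a
    | succ k ih =>
      intro hk a ha
      have ha' : a ∈ 𝒜 (n - k) := h𝒜 (n - (k+1)) (n - k) (by omega) (by omega) ha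
      rw [ih (by omega) a ha']
      exact hφ k (by omega) a 1 ha (one_mem _)
  -- `j' b = φ k (1, b)` for `b ∈ ℬ k`
  have key2aux : ∀ m (hm : m ≤ n), ∀ b (hb : b ∈ ℬ (n - m)),
      j' b = φ (n - m) (by omega) (1, ⟨b, hb⟩) := by
    intro m
    induction m with
    | zero =>
      intro hm b hb
      simpa using hj' b
    | succ m ih =>
      intro hm b hb
      have hk : n - (m+1) < n := by omega
      have e : n - m = n - (m+1) + 1 := by omega
      have hbm : b ∈ ℬ (n - m) := hℬ _ _ (by omega) (by omega) hb
      have step : φ (n - (m+1)) hk.le (1, ⟨b, hb⟩)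
          = φ (n - (m+1) + 1) hk
              (⟨(1:A), by rw [← e]; exact one_mem _⟩, ⟨b, by rw [e] at hbm; exact hbm⟩) :=
        hφ (n - (m+1)) hk 1 b (one_mem _) hb
      have h1 := ih (by omega) b hbm
      have h2 := φcongr (n - m) (n - (m+1) + 1) e (by omega) 1 b (one_mem _) hbm
      exact (h1.trans h2).trans step.symm
  have key2 : ∀ k (hk : k ≤ n), ∀ b (hb : b ∈ ℬ k),
      j' b = φ k hk (1, ⟨b, hb⟩) := by
    intro k hk b hb
    have e : n - (n - k) = k := Nat.sub_sub_self hk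
    have hb2 : b ∈ ℬ (n - (n - k)) := by rw [e]; exact hb
    have h1 := key2aux (n - k) (by omega) b hb2
    have h2 := φcongr (n - (n - k)) k e (by omega) 1 b (one_mem _) hb2
    exact h1.trans h2
  -- commutation in `G`
  have commG : ∀ k (hk : k ≤ n), ∀ a (ha : a ∈ 𝒜 (n - k)), ∀ b (hb : b ∈ ℬ k),
      Commute (j a) (j' b) := by
    intro k hk a ha b hb
    have h1 : j a * j' b = φ k hk (⟨a, ha⟩, ⟨b, hb⟩) := by
      rw [key1 k hk a ha, key2 k hk b hb, ← map_mul]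
      congr 1
      simp [Prod.ext_iff]
    have h2 : j' b * j a = φ k hk (⟨a, ha⟩, ⟨b, hb⟩) := by
      rw [key1 k hk a ha, key2 k hk b hb, ← map_mul]
      congr 1
      simp [Prod.ext_iff]
    exact h1.trans h2.symm
  -- `φ k (a, b) = j a * j' b`
  have decomp : ∀ k (hk : k ≤ n) (p : ↥(𝒜 (n - k)) × ↥(ℬ k)),
      φ k hk p = j p.1 * j' p.2 := by
    intro k hk p
    rw [key1 k hk p.1 p.1.2, key2 k hk p.2 p.2.2, ← map_mul]
    congr 1
    simp [Prod.ext_iff]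
  set L := Coprod.lift j j' with hL
  -- surjectivity
  have hmem : ∀ k (hk : k ≤ n) (p : ↥(𝒜 (n - k)) × ↥(ℬ k)), φ k hk p ∈ L.range := by
    intro k hk p
    refine ⟨Coprod.inl p.1.1 * Coprod.inr p.2.1, ?_⟩
    rw [map_mul, hL, Coprod.lift_apply_inl, Coprod.lift_apply_inr, decomp k hk p]
  have hsurj : Function.Surjective L := by
    set ψ : ∀ k, k ≤ n → (↥(𝒜 (n - k)) × ↥(ℬ k)) →* L.range :=
      fun k hk => (φ k hk).codRestrict L.range (hmem k hk) with hψ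
    obtain ⟨e, he, heuniq⟩ := hcolim G φ hφ
    obtain ⟨h, hh, -⟩ := hcolim L.range ψ (by
      intro k hk a b ha hb
      apply Subtype.ext
      simpa [hψ] using hφ k hk a b ha hb)
    have h1 : L.range.subtype.comp h = MonoidHom.id G := by
      rw [heuniq (L.range.subtype.comp h) (by
        intro k hk
        ext p
        have := congrArg (fun f => f p) (hh k hk)
        simp only [MonoidHom.comp_apply] at this ⊢
        rw [this]
        rfl),
        heuniq (MonoidHom.id G) (by intro k hk; ext p; rfl)]
    intro g
    obtain ⟨w, hw⟩ := (h g).2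
    refine ⟨w, hw.trans ?_⟩
    have := congrArg (fun f => f g) h1
    simpa using this
  refine ⟨hsurj, ?_⟩
  set S : Set (Coprod A B) :=
    {w : Coprod A B | ∃ k ≤ n, ∃ a ∈ 𝒜 (n - k), ∃ b ∈ ℬ k,
      w = ⁅(Coprod.inl a : Coprod A B), (Coprod.inr b : Coprod A B)⁆} with hS
  set N := Subgroup.normalClosure S with hN
  have hNle : N ≤ L.ker := by
    apply Subgroup.normalClosure_le_normal
    rintro w ⟨k, hk, a, ha, b, hb, rfl⟩
    rw [SetLike.mem_coe, MonoidHom.mem_ker, map_commutatorElement]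
    rw [hL, Coprod.lift_apply_inl, Coprod.lift_apply_inr]
    exact commutatorElement_eq_one_iff_commute.mpr (commG k hk a ha b hb)
  -- the quotient map
  set π : Coprod A B →* (Coprod A B ⧸ N) := QuotientGroup.mk' N with hπ
  have commQ : ∀ k (hk : k ≤ n), ∀ (a : ↥(𝒜 (n - k))) (b : ↥(ℬ k)),
      Commute ((π.comp (Coprod.inl.comp (𝒜 (n - k)).subtype)) a)
        ((π.comp (Coprod.inr.comp (ℬ k).subtype)) b) := by
    intro k hk a b
    have hmemN : (⁅(Coprod.inl a.1 : Coprod A B), Coprod.inr b.1⁆ : Coprod A B) ∈ N :=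
      Subgroup.subset_normalClosure ⟨k, hk, a.1, a.2, b.1, b.2, rfl⟩
    have h1 : π ⁅(Coprod.inl a.1 : Coprod A B), Coprod.inr b.1⁆ = 1 :=
      (QuotientGroup.eq_one_iff _).mpr hmemN
    rw [map_commutatorElement] at h1
    exact commutatorElement_eq_one_iff_commute.mp h1
  set ψ : ∀ k, k ≤ n → (↥(𝒜 (n - k)) × ↥(ℬ k)) →* (Coprod A B ⧸ N) :=
    fun k hk => MonoidHom.noncommCoprod (π.comp (Coprod.inl.comp (𝒜 (n - k)).subtype))
      (π.comp (Coprod.inr.comp (ℬ k).subtype)) (commQ k hk) with hψ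
  obtain ⟨h, hh, -⟩ := hcolim (Coprod A B ⧸ N) ψ (by
    intro k hk a b ha hb
    simp [hψ, MonoidHom.noncommCoprod_apply])
  have hcompL : h.comp L = π := by
    apply Coprod.hom_ext
    · ext a
      simp only [MonoidHom.comp_apply, hL, Coprod.lift_apply_inl]
      rw [hj a]
      have := congrArg (fun f => f ((⟨a, by simp [h𝒜top]⟩ : ↥(𝒜 (n - 0))), 1)) (hh 0 (Nat.zero_le n))
      simp only [MonoidHom.comp_apply] at this
      rw [this]
      simp [hψ, MonoidHom.noncommCoprod_apply]
    · ext b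
      simp only [MonoidHom.comp_apply, hL, Coprod.lift_apply_inr]
      rw [hj' b]
      have := congrArg (fun f => f ((1 : ↥(𝒜 (n - n))), (⟨b, by simp [hℬtop]⟩ : ↥(ℬ n)))) (hh n le_rfl)
      simp only [MonoidHom.comp_apply] at this
      rw [this]
      simp [hψ, MonoidHom.noncommCoprod_apply]
  apply le_antisymm _ hNle
  intro x hx
  rw [MonoidHom.mem_ker] at hx
  have : π x = 1 := by
    rw [← hcompL]
    simp [hx]
  rw [← QuotientGroup.ker_mk' N, MonoidHom.mem_ker]
  exact this
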